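/- Let B = (b_1,b_2,...) be a sequence whose terms lie in a compact metric space (X,d). Then the 2-Toeplitz sequence associated with B is a minimal sequence in X^ℕ. -/

import Mathlib

open Set unitInterval

/-- The left shift `S` on sequences: `S(x₁,x₂,x₃,…) = (x₂,x₃,…)`. -/
def shiftSeq {X : Type*} (z : ℕ → X) : ℕ → X := fun n => z (n + 1)

/-- The closure of the forward shift-orbit `{z, Sz, S²z, …}` of a sequence `z`,
inside the sequence space `ℕ → X`.  (For a compact metric space `X` the product
topology on `ℕ → X` is exactly the topology of the metric
`d̄(x̄,ȳ) = ∑ᵢ d(xᵢ,yᵢ)/2ⁱ`.) -/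
def shiftOrbitClosure {X : Type*} [TopologicalSpace X] (z : ℕ → X) : Set (ℕ → X) :=
  closure (Set.range fun k => shiftSeq^[k] z)

/-- A sequence `z` is *minimal* if the closure of its shift-orbit is a minimal
dynamical system under the shift, i.e. every point of this closure has dense
forward orbit in it. -/
def IsMinimalSeq {X : Type*} [TopologicalSpace X] (z : ℕ → X) : Prop :=
  ∀ w ∈ shiftOrbitClosure z, shiftOrbitClosure z ⊆ shiftOrbitClosure w

/-- The 2-Toeplitz sequence of `B = (b 0, b 1, …)` (all sequences 0-indexed):
its `n`-th term is `b p` where `2 ^ p` exactly divides `n + 1`; equivalently the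
term at (1-indexed) position `j` is `b_i` for all `j ≡ 2^(i-1) (mod 2^i)`. -/
def toeplitz2 {X : Type*} (b : ℕ → X) : ℕ → X :=
  fun n => b (padicValNat 2 (n + 1))

lemma shiftSeq_iterate_apply {X : Type*} (z : ℕ → X) (k n : ℕ) :
    shiftSeq^[k] z n = z (n + k) := by
  induction k generalizing z n with
  | zero => rfl
  | succ k ih =>
    rw [Function.iterate_succ_apply, ih]
    simp [shiftSeq, Nat.add_assoc, Nat.add_comm 1 k]

lemma continuous_shiftSeq {X : Type*} [TopologicalSpace X] :
    Continuous (shiftSeq (X := X)) :=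
  continuous_pi fun n => continuous_apply (n + 1)

lemma padicValNat_add_pow_mul (m n k : ℕ) (h : n + 1 < 2 ^ m) :
    padicValNat 2 (n + 1 + k * 2 ^ m) = padicValNat 2 (n + 1) := by
  haveI : Fact (Nat.Prime 2) := ⟨Nat.prime_two⟩
  set p := padicValNat 2 (n + 1) with hp
  have hne : n + 1 ≠ 0 := Nat.succ_ne_zero n
  have hdvd : 2 ^ p ∣ n + 1 := pow_padicValNat_dvd
  have hndvd : ¬ 2 ^ (p + 1) ∣ n + 1 := pow_succ_padicValNat_not_dvd hne
  have hpm : p < m := by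
    have h1 : 2 ^ p ≤ n + 1 := Nat.le_of_dvd (Nat.succ_pos n) hdvd
    have : (2 : ℕ) ^ p < 2 ^ m := lt_of_le_of_lt h1 h
    exact (Nat.pow_lt_pow_iff_right (by norm_num)).mp this
  have hsne : n + 1 + k * 2 ^ m ≠ 0 := by positivity
  have hd2 : 2 ^ (p + 1) ∣ k * 2 ^ m :=
    Dvd.dvd.mul_left (pow_dvd_pow 2 hpm) k
  apply le_antisymm
  · by_contra hlt
    push_neg at hlt
    have : 2 ^ (p + 1) ∣ n + 1 + k * 2 ^ m :=
      (padicValNat_dvd_iff_le hsne).mpr hlt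
    have h3 := Nat.dvd_sub this hd2
    exact hndvd (by simpa using h3)
  · exact (padicValNat_dvd_iff_le hsne).mp
      (dvd_add hdvd (Dvd.dvd.mul_left (pow_dvd_pow 2 hpm.le) k))

/-- Exact periodicity of the prefix: for `n + 1 < 2 ^ m`, the Toeplitz sequence
satisfies `a (n + k * 2 ^ m) = a n`. -/
lemma toeplitz2_periodic {X : Type*} (b : ℕ → X) (m n k : ℕ) (h : n + 1 < 2 ^ m) :
    toeplitz2 b (n + k * 2 ^ m) = toeplitz2 b n := by
  unfold toeplitz2
  rw [show n + k * 2 ^ m + 1 = n + 1 + k * 2 ^ m by ring,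
    padicValNat_add_pow_mul m n k h]

/-- Every point of the orbit closure of the Toeplitz sequence can be shifted to
agree exactly with the Toeplitz sequence on any given prefix. -/
lemma exists_shift_agree {X : Type*} [MetricSpace X] (b : ℕ → X)
    {w : ℕ → X} (hw : w ∈ shiftOrbitClosure (toeplitz2 b)) (L : ℕ) :
    ∃ j, ∀ n < L, shiftSeq^[j] w n = toeplitz2 b n := by
  set a := toeplitz2 b with ha
  set C : Set (ℕ → X) :=
    ⋃ j ∈ Finset.range (2 ^ L), {x : ℕ → X | ∀ n < L, x (n + j) = a n} with hC
  have hCclosed : IsClosed C := by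
    refine isClosed_biUnion_finset fun j _ => ?_
    have heq : {x : ℕ → X | ∀ n < L, x (n + j) = a n}
        = ⋂ n : ℕ, {x : ℕ → X | n < L → x (n + j) = a n} := by
      ext x; simp [Set.mem_iInter]
    rw [heq]
    refine isClosed_iInter fun n => ?_
    by_cases hn : n < L
    · have : {x : ℕ → X | n < L → x (n + j) = a n}
          = (fun x : ℕ → X => x (n + j)) ⁻¹' {a n} := by
        ext x; simp [hn]
      rw [this]
      exact IsClosed.preimage (continuous_apply (n + j)) isClosed_singleton
    · have : {x : ℕ → X | n < L → x (n + j) = a n} = Set.univ := by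
        ext x; simp [hn]
      rw [this]; exact isClosed_univ
  have horb : Set.range (fun k => shiftSeq^[k] a) ⊆ C := by
    rintro _ ⟨k, rfl⟩
    have hP : 0 < 2 ^ L := Nat.pow_pos (by norm_num)
    obtain ⟨j, q, hjlt, hq⟩ : ∃ j q, j < 2 ^ L ∧ k + j = q * 2 ^ L := by
      have hdm := Nat.div_add_mod k (2 ^ L)
      have hm : k % 2 ^ L < 2 ^ L := Nat.mod_lt _ hP
      by_cases h0 : k % 2 ^ L = 0
      · refine ⟨0, k / 2 ^ L, hP, ?_⟩
        have h1 : (k / 2 ^ L) * 2 ^ L = 2 ^ L * (k / 2 ^ L) := by ring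
        omega
      · refine ⟨2 ^ L - k % 2 ^ L, k / 2 ^ L + 1, by omega, ?_⟩
        have h1 : (k / 2 ^ L + 1) * 2 ^ L = 2 ^ L * (k / 2 ^ L) + 2 ^ L := by ring
        omega
    refine Set.mem_biUnion (Finset.mem_range.mpr hjlt) ?_
    intro n hn
    show shiftSeq^[k] a (n + j) = a n
    rw [shiftSeq_iterate_apply]
    have h2L : n + 1 < 2 ^ L := lt_of_le_of_lt (by omega) (Nat.lt_two_pow_self (n := L))
    calc a (n + j + k) = a (n + (k + j)) := by ring_nf
      _ = a (n + q * 2 ^ L) := by rw [hq]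
      _ = a n := toeplitz2_periodic b L n q h2L
  have hwC : w ∈ C := by
    have : shiftOrbitClosure a ⊆ C := closure_minimal horb hCclosed
    exact this hw
  rw [hC] at hwC
  simp only [Set.mem_iUnion] at hwC
  obtain ⟨j, -, hj⟩ := hwC
  exact ⟨j, fun n hn => by rw [shiftSeq_iterate_apply]; exact hj n hn⟩

theorem toeplitz2_isMinimalSeq
    {X : Type*} [MetricSpace X] [CompactSpace X] (b : ℕ → X) :
    IsMinimalSeq (toeplitz2 b) := by
  intro w hw
  set a := toeplitz2 b with ha
  -- a belongs to the orbit closure of w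
  have key : a ∈ shiftOrbitClosure w := by
    choose j hjag using fun L => exists_shift_agree b hw L
    refine mem_closure_of_tendsto (f := fun L => shiftSeq^[j L] w)
      (b := Filter.atTop) ?_ (Filter.Eventually.of_forall fun L => ⟨j L, rfl⟩)
    rw [tendsto_pi_nhds]
    intro n
    refine Filter.Tendsto.congr' ?_ tendsto_const_nhds
    filter_upwards [Filter.eventually_ge_atTop (n + 1)] with L hL
    exact (hjag L n (by omega)).symm
  -- the orbit closure of w is shift-invariant and closed
  have hsub : Set.range (fun k => shiftSeq^[k] a) ⊆ shiftOrbitClosure w := by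
    rintro _ ⟨k, rfl⟩
    have hc : Continuous (shiftSeq (X := X))^[k] := Continuous.iterate continuous_shiftSeq k
    have h1 : shiftSeq^[k] a ∈ shiftSeq^[k] '' shiftOrbitClosure w := ⟨a, key, rfl⟩
    have h2 : shiftSeq^[k] '' shiftOrbitClosure w
        ⊆ closure (shiftSeq^[k] '' Set.range (fun i => shiftSeq^[i] w)) :=
      image_closure_subset_closure_image hc
    refine closure_mono ?_ (h2 h1)
    rintro _ ⟨_, ⟨i, rfl⟩, rfl⟩
    exact ⟨k + i, (Function.iterate_add_apply _ k i w)⟩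
  exact closure_minimal hsub isClosed_closure
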